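/- With K_G = π/(2 ln(1 + √2)), one has K_G = 1/√(1 - (8/π²) ∫_{π/(2 K_G)}^{∞} arcsinh(csch x) dx), where the improper integral converges and the quantity under the square root is positive. -/

import Mathlib

open Real MeasureTheory

/-- The Grothendieck–Krivine constant K_G = π/(2 ln(1+√2)). -/
noncomputable def grothendieckKrivine : ℝ := π / (2 * Real.log (1 + Real.sqrt 2))

open Set Filter Topology

namespace GKaux

noncomputable def L : ℝ := Real.log (1 + Real.sqrt 2)

noncomputable def f (x : ℝ) : ℝ :=
  Real.log (1 + Real.exp (-x)) - Real.log (1 - Real.exp (-x))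

noncomputable def f' (x : ℝ) : ℝ := -(2 * Real.exp (-x) / (1 - Real.exp (-x) ^ 2))

lemma sqrt2_lt : Real.sqrt 2 < 3/2 := by
  rw [show (3:ℝ)/2 = Real.sqrt ((3/2)^2) by rw [Real.sqrt_sq]; norm_num]
  exact Real.sqrt_lt_sqrt (by norm_num) (by norm_num)

lemma sqrt2_gt : 1 < Real.sqrt 2 := by
  nlinarith [Real.sq_sqrt (by norm_num : (2:ℝ) ≥ 0), Real.sqrt_nonneg 2]

lemma L_pos : 0 < L := Real.log_pos (by linarith [sqrt2_gt])

lemma L_lt_one : L < 1 := by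
  have h := Real.exp_one_gt_d9
  have : (1:ℝ) + Real.sqrt 2 < Real.exp 1 := by linarith [sqrt2_lt]
  have := Real.log_lt_log (by linarith [sqrt2_gt]) this
  simpa [L, Real.log_exp] using this

lemma exp_L : Real.exp L = 1 + Real.sqrt 2 :=
  Real.exp_log (by linarith [sqrt2_gt])

lemma exp_neg_L : Real.exp (-L) = Real.sqrt 2 - 1 := by
  rw [Real.exp_neg, exp_L]
  have h2 : Real.sqrt 2 ^ 2 = 2 := Real.sq_sqrt (by norm_num)
  field_simp
  nlinarith [sqrt2_gt]

lemma t_lt_one {x : ℝ} (hx : 0 < x) : Real.exp (-x) < 1 := by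
  rw [Real.exp_lt_one_iff]; linarith

lemma t_pos (x : ℝ) : 0 < Real.exp (-x) := Real.exp_pos _

lemma f_pos {x : ℝ} (hx : 0 < x) : 0 < f x := by
  have h1 : (0:ℝ) < Real.log (1 + Real.exp (-x)) :=
    Real.log_pos (by linarith [t_pos x])
  have h2 : Real.log (1 - Real.exp (-x)) < 0 :=
    Real.log_neg (by linarith [t_lt_one hx]) (by linarith [t_pos x])
  unfold f; linarith

lemma f_anti {x y : ℝ} (hx : 0 < x) (hxy : x ≤ y) : f y ≤ f x := by
  have ht : Real.exp (-y) ≤ Real.exp (-x) := Real.exp_le_exp.2 (by linarith)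
  have h1 : Real.log (1 + Real.exp (-y)) ≤ Real.log (1 + Real.exp (-x)) :=
    Real.log_le_log (by linarith [t_pos y]) (by linarith)
  have h2 : Real.log (1 - Real.exp (-x)) ≤ Real.log (1 - Real.exp (-y)) :=
    Real.log_le_log (by linarith [t_lt_one hx]) (by linarith)
  unfold f; linarith

lemma hasDerivAt_f {x : ℝ} (hx : 0 < x) : HasDerivAt f (f' x) x := by
  have ht : HasDerivAt (fun x : ℝ => Real.exp (-x)) (-Real.exp (-x)) x := by
    convert (hasDerivAt_neg x).exp using 1; ring
  have h1 : HasDerivAt (fun x : ℝ => 1 + Real.exp (-x)) (-Real.exp (-x)) x := by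
    exact ht.const_add 1
  have h2 : HasDerivAt (fun x : ℝ => 1 - Real.exp (-x)) (Real.exp (-x)) x := by
    exact (ht.const_sub 1).congr_deriv (neg_neg _)
  have hl1 := (h1.log (by linarith [t_pos x]))
  have hl2 := (h2.log (by linarith [t_lt_one hx]))
  have := hl1.sub hl2
  refine this.congr_deriv ?_
  have h1' : (0:ℝ) < 1 + Real.exp (-x) := by linarith [t_pos x]
  have h2' : (0:ℝ) < 1 - Real.exp (-x) := by linarith [t_lt_one hx]
  have hp1 : (1:ℝ) + Real.exp (-x) ≠ 0 := by positivity
  have hp2 : (1:ℝ) - Real.exp (-x) ≠ 0 := by linarith [t_lt_one hx]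
  unfold f'
  rw [show (1:ℝ) - Real.exp (-x) ^ 2
      = (1 + Real.exp (-x)) * (1 - Real.exp (-x)) by ring]
  field_simp
  ring

lemma f_contOn : ContinuousOn f (Ioi 0) := fun x hx =>
  (hasDerivAt_f hx).continuousAt.continuousWithinAt

lemma f'_contOn : ContinuousOn f' (Ioi 0) := by
  apply ContinuousOn.neg
  apply ContinuousOn.div
  · exact (continuous_const.mul (Real.continuous_exp.comp continuous_neg)).continuousOn
  · exact (continuous_const.sub ((Real.continuous_exp.comp continuous_neg).pow 2)).continuousOn
  · intro x hx
    have := t_lt_one (mem_Ioi.1 hx)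
    have := t_pos x
    nlinarith

lemma exp_f {x : ℝ} (hx : 0 < x) :
    Real.exp (f x) = (1 + Real.exp (-x)) / (1 - Real.exp (-x)) := by
  unfold f
  rw [Real.exp_sub, Real.exp_log (by linarith [t_pos x]),
    Real.exp_log (by linarith [t_lt_one hx])]

lemma f_invol {x : ℝ} (hx : 0 < x) : f (f x) = x := by
  have hfx : 0 < f x := f_pos hx
  have ht1 : (0:ℝ) < 1 + Real.exp (-x) := by linarith [t_pos x]
  have ht2 : (0:ℝ) < 1 - Real.exp (-x) := by linarith [t_lt_one hx]
  have hexp : Real.exp (-(f x)) = (1 - Real.exp (-x)) / (1 + Real.exp (-x)) := by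
    rw [Real.exp_neg, exp_f hx, inv_div]
  have h1 : 1 + Real.exp (-(f x)) = 2 / (1 + Real.exp (-x)) := by
    rw [hexp]; field_simp; norm_num
  have h2 : 1 - Real.exp (-(f x)) = 2 * Real.exp (-x) / (1 + Real.exp (-x)) := by
    rw [hexp]; field_simp; ring
  show Real.log (1 + Real.exp (-(f x))) - Real.log (1 - Real.exp (-(f x))) = x
  rw [h1, h2, ← Real.log_div (by positivity) (by positivity)]
  have hratio : 2 / (1 + Real.exp (-x)) / (2 * Real.exp (-x) / (1 + Real.exp (-x)))
      = Real.exp x := by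
    rw [Real.exp_neg]
    field_simp
  rw [hratio, Real.log_exp]


lemma f_L : f L = L := by
  have h2 : Real.sqrt 2 ^ 2 = 2 := Real.sq_sqrt (by norm_num)
  have hs := sqrt2_gt
  unfold f
  rw [exp_neg_L]
  rw [show (1:ℝ) + (Real.sqrt 2 - 1) = Real.sqrt 2 by ring,
      show (1:ℝ) - (Real.sqrt 2 - 1) = 2 - Real.sqrt 2 by ring,
      ← Real.log_div (by positivity) (by nlinarith [sqrt2_lt])]
  have : Real.sqrt 2 / (2 - Real.sqrt 2) = 1 + Real.sqrt 2 := by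
    rw [div_eq_iff (by nlinarith [sqrt2_lt])]
    nlinarith
  rw [this]; rfl

lemma arsinh_eq {x : ℝ} (hx : 0 < x) : Real.arsinh (1 / Real.sinh x) = f x := by
  have hs : 0 < Real.sinh x := Real.sinh_pos_iff.2 hx
  have hc : 0 < Real.cosh x := Real.cosh_pos x
  rw [Real.arsinh]
  have hsq : Real.sqrt (1 + (1 / Real.sinh x) ^ 2) = Real.cosh x / Real.sinh x := by
    rw [show (1:ℝ) + (1 / Real.sinh x) ^ 2 = (Real.cosh x / Real.sinh x) ^ 2 by
      field_simp
      nlinarith [Real.cosh_sq x]]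
    exact Real.sqrt_sq (by positivity)
  rw [hsq]
  have harg : 1 / Real.sinh x + Real.cosh x / Real.sinh x
      = (1 + Real.exp (-x)) / (1 - Real.exp (-x)) := by
    rw [Real.sinh_eq, Real.cosh_eq]
    have h1 : Real.exp x = (Real.exp (-x))⁻¹ := by
      rw [← Real.exp_neg, neg_neg]
    have hp : Real.exp (-x) > 0 := t_pos x
    have hl : Real.exp (-x) < 1 := t_lt_one hx
    have hne1 : (1:ℝ) - Real.exp (-x) ≠ 0 := by linarith
    have hne2 : (1:ℝ) - Real.exp (-x) ^ 2 ≠ 0 := by nlinarith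
    rw [h1]
    rw [show Real.sinh x = sinh x from rfl] at hs
    field_simp
    ring
  rw [harg, Real.log_div (by positivity) (by linarith [t_lt_one hx]), f]

lemma f_nonneg {x : ℝ} (hx : 0 < x) : 0 ≤ f x := (f_pos hx).le

lemma f_le_exp {x : ℝ} (hx : L ≤ x) : f x ≤ 3 * Real.exp (-x) := by
  have hx0 : 0 < x := lt_of_lt_of_le L_pos hx
  have hp := t_pos x
  have hhalf : Real.exp (-x) ≤ 1/2 := by
    have : Real.exp (-x) ≤ Real.exp (-L) := Real.exp_le_exp.2 (by linarith)
    rw [exp_neg_L] at this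
    linarith [sqrt2_lt]
  have h1 : Real.log (1 + Real.exp (-x)) ≤ Real.exp (-x) := by
    have := Real.log_le_sub_one_of_pos (show (0:ℝ) < 1 + Real.exp (-x) by linarith)
    linarith
  have h2 : -Real.log (1 - Real.exp (-x)) ≤ 2 * Real.exp (-x) := by
    have hpos : (0:ℝ) < 1 - Real.exp (-x) := by linarith
    have := Real.log_le_sub_one_of_pos (show (0:ℝ) < (1 - Real.exp (-x))⁻¹ by positivity)
    rw [Real.log_inv] at this
    have hineq : (1 - Real.exp (-x))⁻¹ - 1 = Real.exp (-x) / (1 - Real.exp (-x)) := by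
      field_simp
      ring
    rw [hineq] at this
    have : Real.exp (-x) / (1 - Real.exp (-x)) ≤ 2 * Real.exp (-x) := by
      rw [div_le_iff₀ hpos]
      nlinarith
    linarith
  unfold f; linarith

lemma f_le_log {x : ℝ} (hx : 0 < x) (hx1 : x ≤ 1) : f x ≤ Real.log 2 + 1 - Real.log x := by
  have hp := t_pos x
  have hl := t_lt_one hx
  have h1 : Real.log (1 + Real.exp (-x)) ≤ Real.log 2 :=
    Real.log_le_log (by linarith) (by linarith)
  have hkey : x * Real.exp (-x) ≤ 1 - Real.exp (-x) := by
    have h := Real.add_one_le_exp x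
    have hmul : Real.exp (-x) * Real.exp x = 1 := by
      rw [← Real.exp_add]; simp
    nlinarith [mul_le_mul_of_nonneg_left h hp.le]
  have h2 : Real.log x - x ≤ Real.log (1 - Real.exp (-x)) := by
    have := Real.log_le_log (by positivity : (0:ℝ) < x * Real.exp (-x)) hkey
    rwa [Real.log_mul (ne_of_gt hx) (ne_of_gt hp), Real.log_exp] at this
  unfold f; linarith


lemma intf_IoiL : IntegrableOn f (Ioi L) := by
  have hg : IntegrableOn (fun x : ℝ => 3 * Real.exp (-x)) (Ioi L) := by
    have := (exp_neg_integrableOn_Ioi L (by norm_num : (0:ℝ) < 1)).const_mul 3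
    simpa [IntegrableOn] using this
  refine hg.mono' ?_ ?_
  · exact ((f_contOn.mono (fun x hx => lt_trans L_pos hx)).aestronglyMeasurable
      measurableSet_Ioi)
  · filter_upwards [ae_restrict_mem measurableSet_Ioi] with x hx
    rw [Real.norm_eq_abs, abs_of_nonneg (f_nonneg (lt_trans L_pos hx))]
    exact f_le_exp (le_of_lt hx)

lemma neg_mul_log_le {a : ℝ} (ha : 0 < a) (ha1 : a ≤ 1) : -(a * Real.log a) ≤ 1 - a := by
  have h := Real.log_le_sub_one_of_pos (show (0:ℝ) < a⁻¹ by positivity)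
  rw [Real.log_inv] at h
  have : -Real.log a ≤ a⁻¹ - 1 := h
  have := mul_le_mul_of_nonneg_left this ha.le
  calc -(a * Real.log a) = a * -Real.log a := by ring
  _ ≤ a * (a⁻¹ - 1) := mul_le_mul_of_nonneg_left h ha.le
  _ = 1 - a := by field_simp

lemma intf_Ioc : IntegrableOn f (Ioc 0 L) := by
  have hL1 := L_lt_one
  have hLp := L_pos
  have hfi : ∀ n : ℕ, IntegrableOn f (Ioc (L / (n+1)) L) := by
    intro n
    have hp : 0 < L / (n+1) := by positivity
    refine ((f_contOn.mono ?_).integrableOn_Icc).mono_set Ioc_subset_Icc_self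
    intro x hx
    exact lt_of_lt_of_le hp hx.1
  refine integrableOn_Ioc_of_intervalIntegral_norm_bounded_left
    (l := atTop) (I := 5) (a := fun n : ℕ => L / (n+1)) hfi ?_ ?_
  · have : Tendsto (fun n : ℕ => L * (1 / (n+1) : ℝ)) atTop (𝓝 (L * 0)) :=
      tendsto_const_nhds.mul tendsto_one_div_add_atTop_nhds_zero_nat
    simpa [div_eq_mul_inv, one_div] using this
  · filter_upwards with n
    set a := L / (n+1) with ha
    have hap : 0 < a := by positivity
    have haL : a ≤ L := by
      rw [ha, div_le_iff₀ (by positivity)]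
      nlinarith [L_pos]
    have heq : ∫ x in Ioc a L, ‖f x‖ = ∫ x in Ioc a L, f x := by
      refine setIntegral_congr_fun measurableSet_Ioc (fun x hx => ?_)
      rw [Real.norm_eq_abs, abs_of_nonneg (f_nonneg (lt_trans hap hx.1))]
    rw [heq, ← intervalIntegral.integral_of_le haL]
    have hgint : IntervalIntegrable (fun x => Real.log 2 + 1 - Real.log x) volume a L := by
      apply ContinuousOn.intervalIntegrable
      rw [uIcc_of_le haL]
      exact continuousOn_const.sub (Real.continuousOn_log.mono
        (fun x hx => ne_of_gt (lt_of_lt_of_le hap hx.1)))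
    have hbound : ∫ x in a..L, f x ≤ ∫ x in a..L, (Real.log 2 + 1 - Real.log x) := by
      refine intervalIntegral.integral_mono_on haL
        ((intervalIntegrable_iff_integrableOn_Ioc_of_le haL).2 (hfi n)) hgint ?_
      intro x hx
      exact f_le_log (lt_of_lt_of_le hap hx.1) (le_trans hx.2 hL1.le)
    have hval : ∫ x in a..L, (Real.log 2 + 1 - Real.log x)
        = (L - a) * (Real.log 2 + 1) - (L * Real.log L - a * Real.log a - L + a) := by
      rw [intervalIntegral.integral_sub (intervalIntegrable_const)
        (by apply ContinuousOn.intervalIntegrable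
            rw [uIcc_of_le haL]
            exact Real.continuousOn_log.mono (fun x hx => ne_of_gt (lt_of_lt_of_le hap hx.1))),
        intervalIntegral.integral_const, integral_log,
        smul_eq_mul]
      try ring
    have hlog2 : Real.log 2 ≤ 1 := by
      have := Real.log_le_sub_one_of_pos (show (0:ℝ) < 2 by norm_num)
      linarith
    have hLlog := neg_mul_log_le L_pos hL1.le
    have halog : a * Real.log a ≤ 0 :=
      mul_nonpos_iff.2 (Or.inl ⟨hap.le, (Real.log_nonpos hap.le (le_trans haL hL1.le))⟩)
    calc ∫ x in a..L, f x ≤ _ := hbound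
    _ = _ := hval
    _ ≤ 5 := by nlinarith

lemma intf_Ioi0 : IntegrableOn f (Ioi 0) := by
  rw [← Set.Ioc_union_Ioi_eq_Ioi L_pos.le]
  exact intf_Ioc.union intf_IoiL


lemma hasSum_f {x : ℝ} (hx : 0 < x) :
    HasSum (fun n : ℕ => 2 * Real.exp (-x) ^ (2*n+1) / (2*(n:ℝ)+1)) (f x) := by
  set t := Real.exp (-x) with htdef
  have htpos : 0 < t := t_pos x
  have ht : |t| < 1 := by rw [abs_of_pos htpos]; exact t_lt_one hx
  have h1 : HasSum (fun n : ℕ => t ^ (n+1) / (n+1)) (-Real.log (1 - t)) :=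
    Real.hasSum_pow_div_log_of_abs_lt_one ht
  have h2 : HasSum (fun n : ℕ => (-t) ^ (n+1) / (n+1)) (-Real.log (1 + t)) := by
    have := Real.hasSum_pow_div_log_of_abs_lt_one (x := -t) (by rwa [abs_neg])
    simpa [sub_neg_eq_add] using this
  have hsub : HasSum (fun n : ℕ => t ^ (n+1) / (n+1) - (-t) ^ (n+1) / (n+1)) (f x) := by
    have h := h1.sub h2
    have : -Real.log (1 - t) - -Real.log (1 + t) = f x := by unfold f; ring
    rwa [this] at h
  have hinj : Function.Injective (fun n : ℕ => 2 * n) := fun a b h =>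
    Nat.eq_of_mul_eq_mul_left two_pos h
  have hsupp : ∀ m ∉ Set.range (fun n : ℕ => 2 * n),
      t ^ (m+1) / (m+1) - (-t) ^ (m+1) / (m+1) = 0 := by
    intro m hm
    have hodd : Odd m := by
      rcases Nat.even_or_odd m with he | ho
      · obtain ⟨k, hk⟩ := he
        exact absurd ⟨k, show 2 * k = m by omega⟩ hm
      · exact ho
    have heven : Even (m + 1) := by
      rcases hodd with ⟨k, hk⟩; exact ⟨k + 1, by omega⟩
    rw [heven.neg_pow]; ring
  have hfin := (Function.Injective.hasSum_iff hinj hsupp).2 hsub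
  convert hfin using 2 with n
  have hodd : Odd (2 * n + 1) := ⟨n, by omega⟩
  simp only [Function.comp]
  rw [hodd.neg_pow]
  push_cast
  ring

lemma hasSum_odd_inv_sq : HasSum (fun n : ℕ => 1 / (2*(n:ℝ)+1)^2) (π^2/8) := by
  have h := hasSum_zeta_two
  have he : HasSum (fun k : ℕ => (1:ℝ) / (2*(k:ℝ))^2) (π^2/24) := by
    have h4 := h.mul_left (1/4)
    have : (fun k : ℕ => (1:ℝ)/4 * (1 / (k:ℝ)^2)) = fun k : ℕ => (1:ℝ) / (2*(k:ℝ))^2 := by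
      funext k
      rcases eq_or_ne (k:ℝ) 0 with hk | hk
      · simp [hk]
      · field_simp; ring
    rw [this] at h4
    rw [show π^2/24 = 1/4*(π^2/6) by ring]
    exact h4
  have hs : Summable (fun n : ℕ => (1:ℝ) / (2*(n:ℝ)+1)^2) := by
    have hsh : Summable ((fun n : ℕ => (1:ℝ) / (n:ℝ)^2) ∘ (fun n : ℕ => n + 1)) :=
      h.summable.comp_injective (add_left_injective 1)
    refine Summable.of_nonneg_of_le (fun n => by positivity) (fun n => ?_) hsh
    show (1:ℝ) / (2*(n:ℝ)+1)^2 ≤ 1 / ((n+1 : ℕ):ℝ)^2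
    apply one_div_le_one_div_of_le (by positivity)
    push_cast
    nlinarith [Nat.cast_nonneg (α := ℝ) n]
  have ho := hs.hasSum
  have heven : HasSum (fun k : ℕ => (1:ℝ) / (((2*k : ℕ)):ℝ)^2) (π^2/24) := by
    convert he using 2 with k
    push_cast; ring
  have hodd2 : HasSum (fun k : ℕ => (1:ℝ) / (((2*k+1 : ℕ)):ℝ)^2)
      (∑' n : ℕ, (1:ℝ) / (2*(n:ℝ)+1)^2) := by
    convert ho using 2 with k
    push_cast; ring
  have hcomb := HasSum.even_add_odd (f := fun n : ℕ => (1:ℝ) / (n:ℝ)^2) heven hodd2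
  have hu := hcomb.unique h
  have hval : ∑' n : ℕ, (1:ℝ) / (2*(n:ℝ)+1)^2 = π^2/8 := by linarith
  exact hval ▸ ho

lemma integral_exp_neg_mul {c : ℝ} (hc : 0 < c) :
    ∫ x in Ioi (0:ℝ), Real.exp (-(c*x)) = 1/c := by
  have h := integral_comp_mul_left_Ioi (fun x => Real.exp (-x)) 0 hc
  simp only [mul_zero, smul_eq_mul] at h
  rw [show (∫ x in Ioi (0:ℝ), Real.exp (-(c*x)))
      = ∫ x in Ioi (0:ℝ), (fun y => Real.exp (-y)) (c*x) from rfl, h,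
    integral_exp_neg_Ioi]
  simp [one_div]

lemma F_integrable (n : ℕ) :
    IntegrableOn (fun x : ℝ => 2 * Real.exp (-x) ^ (2*n+1) / (2*(n:ℝ)+1)) (Ioi 0) := by
  have hc : (0:ℝ) < 2*(n:ℝ)+1 := by positivity
  have heq : (fun x : ℝ => 2 * Real.exp (-x) ^ (2*n+1) / (2*(n:ℝ)+1))
      = fun x : ℝ => (2/(2*(n:ℝ)+1)) * Real.exp (-(2*(n:ℝ)+1) * x) := by
    funext x
    rw [← Real.exp_nat_mul]
    push_cast
    rw [show ((2*(n:ℝ)+1) * -x) = -(2*(n:ℝ)+1) * x by ring]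
    ring
  rw [heq]
  exact (exp_neg_integrableOn_Ioi 0 hc).const_mul _

lemma F_integral (n : ℕ) :
    ∫ x in Ioi (0:ℝ), 2 * Real.exp (-x) ^ (2*n+1) / (2*(n:ℝ)+1)
      = 2 * (1 / (2*(n:ℝ)+1)^2) := by
  have hc : (0:ℝ) < 2*(n:ℝ)+1 := by positivity
  have heq : (fun x : ℝ => 2 * Real.exp (-x) ^ (2*n+1) / (2*(n:ℝ)+1))
      = fun x : ℝ => (2/(2*(n:ℝ)+1)) * Real.exp (-((2*(n:ℝ)+1) * x)) := by
    funext x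
    rw [← Real.exp_nat_mul]
    push_cast
    rw [show ((2*(n:ℝ)+1) * -x) = -((2*(n:ℝ)+1) * x) by ring]
    ring
  rw [heq, MeasureTheory.integral_const_mul, integral_exp_neg_mul hc]
  field_simp

lemma total_integral : ∫ x in Ioi (0:ℝ), f x = π^2/4 := by
  set F : ℕ → ℝ → ℝ := fun n x => 2 * Real.exp (-x) ^ (2*n+1) / (2*(n:ℝ)+1) with hF
  have hFnonneg : ∀ n x, 0 ≤ F n x := fun n x => by positivity
  have hmeas : ∀ n : ℕ, AEStronglyMeasurable (F n) (volume.restrict (Ioi 0)) := by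
    intro n
    exact (Continuous.aestronglyMeasurable (by fun_prop))
  have hsummable : Summable (fun n : ℕ => 2 * (1 / (2*(n:ℝ)+1)^2)) :=
    hasSum_odd_inv_sq.summable.mul_left 2
  have hf' : ∑' n : ℕ, ∫⁻ x, ‖F n x‖₊ ∂(volume.restrict (Ioi 0)) ≠ ⊤ := by
    have hlint : ∀ n : ℕ, ∫⁻ x, ‖F n x‖₊ ∂(volume.restrict (Ioi 0))
        = ENNReal.ofReal (2 * (1 / (2*(n:ℝ)+1)^2)) := by
      intro n
      show ∫⁻ x, ‖F n x‖ₑ ∂(volume.restrict (Ioi 0)) = _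
      rw [← ofReal_integral_norm_eq_lintegral_enorm (F_integrable n)]
      congr 1
      rw [← F_integral n]
      refine setIntegral_congr_fun measurableSet_Ioi (fun x _ => ?_)
      rw [Real.norm_eq_abs, abs_of_nonneg (hFnonneg n x)]
    simp_rw [hlint]
    rw [← ENNReal.ofReal_tsum_of_nonneg (fun n => by positivity) hsummable]
    exact ENNReal.ofReal_ne_top
  have key := MeasureTheory.integral_tsum hmeas hf'
  have hcong : ∫ x in Ioi (0:ℝ), f x = ∫ x in Ioi (0:ℝ), ∑' n : ℕ, F n x := by
    refine setIntegral_congr_fun measurableSet_Ioi (fun x hx => ?_)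
    exact (hasSum_f hx).tsum_eq.symm
  rw [hcong, key]
  have : ∀ n : ℕ, ∫ x in Ioi (0:ℝ), F n x = 2 * (1 / (2*(n:ℝ)+1)^2) := F_integral
  simp_rw [this]
  rw [(hasSum_odd_inv_sq.mul_left 2).tsum_eq]
  ring


lemma Ln_pos (n : ℕ) : 0 < L + (n:ℝ) := by
  have h1 := L_pos
  have h2 : (0:ℝ) ≤ n := Nat.cast_nonneg n
  linarith

lemma key (B : ℝ) (hB : L ≤ B) :
    ∫ y in Ioc (f B) L, f y = L^2 + (∫ x in Ioc L B, f x) - B * f B := by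
  have hBpos : 0 < B := lt_of_lt_of_le L_pos hB
  have hfB_pos : 0 < f B := f_pos hBpos
  have hfB_le : f B ≤ L := by have := f_anti L_pos hB; rwa [f_L] at this
  have hIcc : uIcc L B = Icc L B := uIcc_of_le hB
  have hIccpos : Icc L B ⊆ Ioi 0 := fun x hx => lt_of_lt_of_le L_pos hx.1
  have hIccpos' : uIcc L B ⊆ Ioi 0 := by rw [hIcc]; exact hIccpos
  have hderiv : ∀ x ∈ uIcc L B, HasDerivAt f (f' x) x := fun x hx =>
    hasDerivAt_f (hIccpos' hx)
  have hcont' : ContinuousOn f' (uIcc L B) := f'_contOn.mono hIccpos'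
  have himg : f '' uIcc L B ⊆ Ioi 0 := by
    rintro y ⟨x, hx, rfl⟩; exact f_pos (hIccpos' hx)
  have hg : ContinuousOn f (f '' uIcc L B) := f_contOn.mono himg
  have hsub := intervalIntegral.integral_comp_smul_deriv' hderiv hcont' hg
  have hcongr : ∫ x in L..B, f' x • (f ∘ f) x = ∫ x in L..B, x * f' x := by
    refine intervalIntegral.integral_congr (fun x hx => ?_)
    simp only [Function.comp, smul_eq_mul]
    rw [f_invol (hIccpos' hx), mul_comm]
  have hparts := intervalIntegral.integral_mul_deriv_eq_deriv_mul
      (u := fun x => x) (u' := fun _ => 1) (v := f) (v' := f')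
      (fun x _ => hasDerivAt_id x) hderiv intervalIntegrable_const
      hcont'.intervalIntegrable
  have hone : ∫ x in L..B, 1 * f x = ∫ x in Ioc L B, f x := by
    simp only [one_mul]
    exact intervalIntegral.integral_of_le hB
  have hLHS : ∫ y in f L..f B, f y = -(∫ y in Ioc (f B) L, f y) := by
    rw [f_L, intervalIntegral.integral_symm, intervalIntegral.integral_of_le hfB_le]
  rw [hcongr, hparts, hLHS, hone, f_L] at hsub
  simp only at hsub
  linarith

lemma htendf : Tendsto (fun n : ℕ => f (L + n)) atTop (𝓝 0) := by
  have hb : Tendsto (fun n : ℕ => 3 * Real.exp (-(L + n))) atTop (𝓝 0) := by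
    have h1 : Tendsto (fun n : ℕ => L + (n:ℝ)) atTop atTop :=
      tendsto_atTop_add_const_left _ _ tendsto_natCast_atTop_atTop
    have h2 : Tendsto (fun x : ℝ => Real.exp (-x)) atTop (𝓝 0) :=
      Real.tendsto_exp_neg_atTop_nhds_zero
    have := (h2.comp h1).const_mul (3:ℝ)
    simpa using this
  refine squeeze_zero (fun n => f_nonneg (Ln_pos n)) (fun n => ?_) hb
  exact f_le_exp (by simp [le_add_iff_nonneg_right])

lemma hUnion1 : ⋃ n : ℕ, Ioc (f (L + n)) L = Ioc 0 L := by
  ext y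
  simp only [mem_iUnion, mem_Ioc]
  constructor
  · rintro ⟨n, h1, h2⟩
    exact ⟨lt_trans (f_pos (Ln_pos n)) h1, h2⟩
  · rintro ⟨hy0, hyL⟩
    obtain ⟨n, hn⟩ := (htendf.eventually_lt_const hy0).exists
    exact ⟨n, hn, hyL⟩

lemma hUnion2 : ⋃ n : ℕ, Ioc L (L + n) = Ioi L := by
  ext x
  simp only [mem_iUnion, mem_Ioc, mem_Ioi]
  constructor
  · rintro ⟨n, h1, _⟩; exact h1
  · intro hx
    obtain ⟨n, hn⟩ := exists_nat_ge (x - L)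
    exact ⟨n, hx, by linarith⟩

lemma I_val : ∫ x in Ioi L, f x = π^2/8 - L^2/2 := by
  set K := ∫ x in Ioc 0 L, f x with hKdef
  set I := ∫ x in Ioi L, f x with hIdef
  have hsplit : K + I = π^2/4 := by
    rw [hKdef, hIdef, ← setIntegral_union (Ioc_disjoint_Ioi le_rfl) measurableSet_Ioi
      intf_Ioc intf_IoiL, Set.Ioc_union_Ioi_eq_Ioi L_pos.le]
    exact total_integral
  have hmono1 : Monotone (fun n : ℕ => Ioc (f (L + (n:ℝ))) L) := by
    intro n m hnm
    refine Ioc_subset_Ioc_left (f_anti (Ln_pos n) ?_)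
    have : (n:ℝ) ≤ m := Nat.cast_le.2 hnm
    linarith
  have hK : Tendsto (fun n : ℕ => ∫ x in Ioc (f (L + n)) L, f x) atTop (𝓝 K) := by
    have := tendsto_setIntegral_of_monotone (fun n : ℕ => measurableSet_Ioc) hmono1
      (by rw [hUnion1]; exact intf_Ioc)
    rwa [hUnion1] at this
  have hmono2 : Monotone (fun n : ℕ => Ioc L (L + (n:ℝ))) := by
    intro n m hnm
    refine Ioc_subset_Ioc_right ?_
    have : (n:ℝ) ≤ m := Nat.cast_le.2 hnm
    linarith
  have hI : Tendsto (fun n : ℕ => ∫ x in Ioc L (L + n), f x) atTop (𝓝 I) := by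
    have := tendsto_setIntegral_of_monotone (fun n : ℕ => measurableSet_Ioc) hmono2
      (by rw [hUnion2]; exact intf_IoiL)
    rwa [hUnion2] at this
  have h3 : Tendsto (fun n : ℕ => (L + (n:ℝ)) * f (L + n)) atTop (𝓝 0) := by
    have h1 : Tendsto (fun n : ℕ => L + (n:ℝ)) atTop atTop :=
      tendsto_atTop_add_const_left _ _ tendsto_natCast_atTop_atTop
    have h2 := (tendsto_pow_mul_exp_neg_atTop_nhds_zero 1).comp h1
    have hb : Tendsto (fun n : ℕ => 3 * ((L + (n:ℝ)) * Real.exp (-(L + n)))) atTop (𝓝 0) := by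
      have := h2.const_mul (3:ℝ)
      simpa [pow_one, mul_comm] using this
    refine squeeze_zero (fun n => ?_) (fun n => ?_) hb
    · exact mul_nonneg (Ln_pos n).le (f_nonneg (Ln_pos n))
    · have hle := f_le_exp (show L ≤ L + (n:ℝ) by simp [le_add_iff_nonneg_right])
      have hpos : (0:ℝ) ≤ L + n := (Ln_pos n).le
      nlinarith
  have heq : (fun n : ℕ => ∫ x in Ioc (f (L + n)) L, f x)
      = fun n : ℕ => L^2 + (∫ x in Ioc L (L + n), f x) - (L + (n:ℝ)) * f (L + n) := by
    funext n
    exact key (L + n) (by simp [le_add_iff_nonneg_right])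
  rw [heq] at hK
  have hRHS : Tendsto (fun n : ℕ => L^2 + (∫ x in Ioc L (L + n), f x) - (L + (n:ℝ)) * f (L + n))
      atTop (𝓝 (L^2 + I - 0)) := (tendsto_const_nhds.add hI).sub h3
  have hKI : K = L^2 + I - 0 := tendsto_nhds_unique hK hRHS
  rw [sub_zero] at hKI
  linarith

end GKaux

/-- With K_G = π/(2 ln(1+√2)),
K_G = 1/√(1 - (8/π²) ∫_{π/(2K_G)}^∞ arcsinh(csch x) dx), where the improper integral
converges and the quantity under the square root is positive. -/
theorem grothendieck_krivine_arsinh_csch :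
    IntegrableOn (fun x : ℝ => Real.arsinh (1 / Real.sinh x))
      (Set.Ioi (π / (2 * grothendieckKrivine))) ∧
    0 < 1 - (8 / π ^ 2) * ∫ x in Set.Ioi (π / (2 * grothendieckKrivine)),
              Real.arsinh (1 / Real.sinh x) ∧
    grothendieckKrivine
      = 1 / Real.sqrt (1 - (8 / π ^ 2) *
          ∫ x in Set.Ioi (π / (2 * grothendieckKrivine)),
            Real.arsinh (1 / Real.sinh x)) := by
  have hπ := Real.pi_pos
  have hL := GKaux.L_pos
  have hKG : grothendieckKrivine = π / (2 * GKaux.L) := rfl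
  have harg : π / (2 * grothendieckKrivine) = GKaux.L := by
    rw [hKG]
    field_simp
  rw [harg]
  have hEq : EqOn GKaux.f (fun x : ℝ => Real.arsinh (1 / Real.sinh x)) (Ioi GKaux.L) :=
    fun x hx => (GKaux.arsinh_eq (lt_trans hL hx)).symm
  have hint : IntegrableOn (fun x : ℝ => Real.arsinh (1 / Real.sinh x)) (Ioi GKaux.L) :=
    GKaux.intf_IoiL.congr_fun hEq measurableSet_Ioi
  have hIeq : ∫ x in Ioi GKaux.L, Real.arsinh (1 / Real.sinh x) = π^2/8 - GKaux.L^2/2 := by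
    rw [← setIntegral_congr_fun measurableSet_Ioi hEq]
    exact GKaux.I_val
  rw [hIeq]
  have hval : 1 - 8 / π ^ 2 * (π ^ 2 / 8 - GKaux.L ^ 2 / 2) = (2 * GKaux.L / π)^2 := by
    field_simp
    ring
  refine ⟨hint, ?_, ?_⟩
  · rw [hval]; positivity
  · rw [hval, Real.sqrt_sq (div_nonneg (by linarith) hπ.le), hKG, one_div_div]
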